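/- arXiv:2407.01140 — 3 statements merged into one kernel-verified Lean document; each statement's English description precedes it below -/
import Mathlib

section
/- Let X be a topological space and A ⊆ X a subspace. Let U be an open subset of X such that U ∩ A is path-connected and, for every x ∈ U ∩ A, the natural map from im(π₁(U∩A, x) → π₁(X, x)) into im(π₁(U, x) → π₁(X, x)) is surjective. Then for every path γ : [0,1] → U with both endpoints in U ∩ A, there exists a path λ : [0,1] → U ∩ A with the same endpoints such that λ is homotopic to γ in X relative to the endpoints. -/
/-- If `U ∩ A` is path-connected (empty set allowed) and for every basepoint in `U ∩ A`
the image of `π₁(U ∩ A)` in `π₁(X)` surjects onto the image of `π₁(U)` (phrased via loops),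
then every path in `U` with endpoints in `U ∩ A` is homotopic in `X` rel endpoints to a
path in `U ∩ A`. -/
theorem stmt0 {X : Type*} [TopologicalSpace X] (A U : Set X) (hU : IsOpen U)
    (hRC1 : ∀ x ∈ U ∩ A, ∀ y ∈ U ∩ A, JoinedIn (U ∩ A) x y)
    (hRC2 : ∀ x ∈ U ∩ A, ∀ γ : Path x x, (∀ t, γ t ∈ U) →
      ∃ lam : Path x x, (∀ t, lam t ∈ U ∩ A) ∧ Path.Homotopic γ lam) :
    ∀ (a b : X), a ∈ U ∩ A → b ∈ U ∩ A → ∀ γ : Path a b, (∀ t, γ t ∈ U) →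
      ∃ lam : Path a b, (∀ t, lam t ∈ U ∩ A) ∧ Path.Homotopic γ lam := by
  intro a b ha hb γ hγ
  obtain ⟨δ, hδ⟩ := hRC1 b hb a ha
  have hloop : ∀ t, (γ.trans δ) t ∈ U := by
    intro t
    have h : (γ.trans δ) t ∈ Set.range (γ.trans δ) := Set.mem_range_self t
    rw [Path.trans_range] at h
    rcases h with ⟨s, hs⟩ | ⟨s, hs⟩
    · exact hs ▸ hγ s
    · exact hs ▸ (hδ s).1
  obtain ⟨lam0, hlam0mem, hlam0⟩ := hRC2 a ha (γ.trans δ) hloop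
  refine ⟨lam0.trans δ.symm, ?_, ?_⟩
  · intro t
    have h : (lam0.trans δ.symm) t ∈ Set.range (lam0.trans δ.symm) := Set.mem_range_self t
    rw [Path.trans_range, Path.symm_range] at h
    rcases h with ⟨s, hs⟩ | ⟨s, hs⟩
    · exact hs ▸ hlam0mem s
    · exact hs ▸ hδ s
  · -- γ ≃ γ.trans (refl b) ≃ γ.trans (δ.trans δ.symm) ≃ (γ.trans δ).trans δ.symm
    --   ≃ lam0.trans δ.symm
    have h1 : Path.Homotopic γ (γ.trans (Path.refl b)) := ⟨(Path.Homotopy.transRefl γ).symm⟩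
    have h2 : Path.Homotopic (Path.refl b) (δ.trans δ.symm) := ⟨Path.Homotopy.reflTransSymm δ⟩
    have h3 : Path.Homotopic (γ.trans (Path.refl b)) (γ.trans (δ.trans δ.symm)) :=
      Path.Homotopic.hcomp (Path.Homotopic.refl γ) h2
    have h4 : Path.Homotopic (γ.trans (δ.trans δ.symm)) ((γ.trans δ).trans δ.symm) :=
      ⟨(Path.Homotopy.transAssoc γ δ δ.symm).symm⟩
    have h5 : Path.Homotopic ((γ.trans δ).trans δ.symm) (lam0.trans δ.symm) :=
      Path.Homotopic.hcomp hlam0 (Path.Homotopic.refl δ.symm)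
    exact ((h1.trans h3).trans h4).trans h5
end

section
/- Let G be a group acting on a set S (the algebraic simplices of a multicomplex), let L ⊆ S be a subset, and let H ≤ G be a subgroup with H · L ⊆ L. Suppose the action of G has orbits in L induced by H, i.e. for every σ ∈ L and g ∈ G with g·σ ∈ L there exists h ∈ H with h·σ = g·σ. Then the restriction map from the space of G-invariant bounded real-valued functions on S to the space of H-invariant bounded real-valued functions on L is surjective. -/
/-- If the action of `G` on `S` has orbits in `L` induced by the subgroup `H` (which
preserves `L`), then every `H`-invariant bounded real-valued function on `L` extends to a
`G`-invariant bounded real-valued function on `S`: the restriction map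
`C_b(S)^G → C_b(L)^H` is surjective. -/
theorem stmt5 {S : Type*} {G : Type*} [Group G] [MulAction G S]
    (L : Set S) (H : Subgroup G)
    (hHL : ∀ h : H, ∀ σ ∈ L, (h : G) • σ ∈ L)
    (horb : ∀ σ ∈ L, ∀ g : G, g • σ ∈ L → ∃ h : H, (h : G) • σ = g • σ) :
    ∀ z : S → ℝ, (∃ C : ℝ, ∀ σ, |z σ| ≤ C) →
      (∀ h : H, ∀ σ ∈ L, z ((h : G) • σ) = z σ) →
      ∃ z' : S → ℝ, (∃ C : ℝ, ∀ σ, |z' σ| ≤ C) ∧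
        (∀ g : G, ∀ σ : S, z' (g • σ) = z' σ) ∧
        (∀ σ ∈ L, z' σ = z σ) := by
  intro z ⟨C, hC⟩ hz
  classical
  -- key: z is constant on G-orbits intersected with L
  have key : ∀ τ₁ ∈ L, ∀ τ₂ ∈ L, (∃ g : G, g • τ₁ = τ₂) → z τ₂ = z τ₁ := by
    rintro τ₁ h₁ τ₂ h₂ ⟨g, rfl⟩
    obtain ⟨h, hh⟩ := horb τ₁ h₁ g h₂
    rw [← hh, hz h τ₁ h₁]
  set P : S → Prop := fun σ => ∃ τ, τ ∈ L ∧ ∃ g : G, g • τ = σ with hP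
  refine ⟨fun σ => if h : P σ then z h.choose else 0, ⟨max C 0, ?_⟩, ?_, ?_⟩
  · intro σ
    by_cases h : P σ
    · simp only [dif_pos h]
      exact le_trans (hC _) (le_max_left _ _)
    · simp [dif_neg h]
  · intro g σ
    by_cases h : P σ
    · have h' : P (g • σ) := by
        obtain ⟨τ, hτ, g', rfl⟩ := h
        exact ⟨τ, hτ, g * g', (mul_smul g g' τ)⟩
      simp only [dif_pos h, dif_pos h']
      obtain ⟨hτ1, g₁, hg₁⟩ := h.choose_spec
      obtain ⟨hτ2, g₂, hg₂⟩ := h'.choose_spec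
      refine key _ hτ1 _ hτ2 ⟨g₂⁻¹ * g * g₁, ?_⟩
      rw [mul_smul, mul_smul, hg₁]; exact inv_smul_eq_iff.mpr hg₂.symm
    · have h' : ¬ P (g • σ) := by
        intro ⟨τ, hτ, g', hg'⟩
        exact h ⟨τ, hτ, g⁻¹ * g', by rw [mul_smul, hg', inv_smul_smul]⟩
      simp only [dif_neg h, dif_neg h']
      
  · intro σ hσ
    have h : P σ := ⟨σ, hσ, 1, one_smul _ _⟩
    simp only [dif_pos h]
    obtain ⟨hτ, g, hg⟩ := h.choose_spec
    exact key _ hτ _ hσ ⟨g, hg⟩ ▸ rfl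
end

section
/- Let G be a group acting on a set S and H ≤ G a subgroup preserving L ⊆ S such that G-orbits in L are induced by H. Then the sequence 0 → C_b(S, L)^G → C_b(S)^G → C_b(L)^H → 0 is exact, where C_b(S, L)^G denotes G-invariant bounded functions on S vanishing on L, and the maps are inclusion and restriction. -/
/-- Exactness of `0 → C_b(S, L)^G → C_b(S)^G → C_b(L)^H → 0` when `G`-orbits in `L` are
induced by `H`: a `G`-invariant bounded function lies in `C_b(S, L)^G` iff it restricts to
`0` on `L` (exactness at the middle, with injectivity of the inclusion being evident), and
every `H`-invariant bounded function on `L` is the restriction of a `G`-invariant bounded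
function on `S` (exactness at the right). -/
theorem stmt17 {S : Type*} {G : Type*} [Group G] [MulAction G S]
    (L : Set S) (H : Subgroup G)
    (hHL : ∀ (h : H) (σ : L), (h : G) • (σ : S) ∈ L)
    (horb : ∀ σ ∈ L, ∀ g : G, g • σ ∈ L → ∃ h : H, (h : G) • σ = g • σ) :
    -- exactness at the middle term
    (∀ f : S → ℝ, (∃ C : ℝ, ∀ σ, |f σ| ≤ C) → (∀ (g : G) (σ : S), f (g • σ) = f σ) →
      ((∀ σ : L, f σ = 0) ↔
        f ∈ {g : S → ℝ | (∃ C : ℝ, ∀ σ, |g σ| ≤ C) ∧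
          (∀ (g' : G) (σ : S), g (g' • σ) = g σ) ∧ ∀ σ ∈ L, g σ = 0})) ∧
    -- exactness at the right: surjectivity of the restriction map
    (∀ z : L → ℝ, (∃ C : ℝ, ∀ σ : L, |z σ| ≤ C) →
      (∀ (h : H) (σ : L), z ⟨(h : G) • (σ : S), hHL h σ⟩ = z σ) →
      ∃ f : S → ℝ, (∃ C : ℝ, ∀ σ, |f σ| ≤ C) ∧
        (∀ (g : G) (σ : S), f (g • σ) = f σ) ∧ ∀ σ : L, f σ = z σ) := by
  constructor
  · intro f hb hinv
    constructor
    · intro h0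
      exact ⟨hb, hinv, fun σ hσ => h0 ⟨σ, hσ⟩⟩
    · rintro ⟨-, -, h0⟩ σ
      exact h0 σ σ.2
  · intro z ⟨C, hC⟩ hzinv
    classical
    -- key: z is constant on G-orbits intersected with L
    have key : ∀ τ τ' : L, (∃ g : G, g • (τ : S) = (τ' : S)) → z τ = z τ' := by
      rintro τ τ' ⟨g, hg⟩
      obtain ⟨h, hh⟩ := horb τ τ.2 g (hg ▸ τ'.2)
      have : z ⟨(h : G) • (τ : S), hHL h τ⟩ = z τ' := by
        congr 1
        exact Subtype.ext (hh.trans hg)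
      rw [← this, hzinv]
    set P : S → Prop := fun σ => ∃ τ : L, ∃ g : G, g • (τ : S) = σ with hP
    set f : S → ℝ := fun σ => if h : P σ then z h.choose else 0 with hf
    have fval : ∀ (σ : S) (τ : L) (g : G), g • (τ : S) = σ → f σ = z τ := by
      intro σ τ g hg
      have hp : P σ := ⟨τ, g, hg⟩
      have := hp.choose_spec
      obtain ⟨g', hg'⟩ := this
      have : f σ = z hp.choose := by simp [hf, hp]
      rw [this]
      exact key _ _ ⟨g⁻¹ * g', by rw [mul_smul, hg', ← hg, inv_smul_smul]⟩
    refine ⟨f, ⟨max C 0, ?_⟩, ?_, ?_⟩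
    · intro σ
      by_cases hp : P σ
      · obtain ⟨τ, g, hg⟩ := hp
        rw [fval σ τ g hg]
        exact le_max_of_le_left (hC τ)
      · simp [hf, hp]
    · intro g σ
      by_cases hp : P σ
      · obtain ⟨τ, g', hg'⟩ := hp
        rw [fval σ τ g' hg', fval (g • σ) τ (g * g') (by rw [mul_smul, hg'])]
      · have hp' : ¬ P (g • σ) := by
          rintro ⟨τ, g', hg'⟩
          exact hp ⟨τ, g⁻¹ * g', by rw [mul_smul, hg', inv_smul_smul]⟩
        simp [hf, hp, hp']
    · intro σ
      exact fval σ σ 1 (one_smul _ _)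
end
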